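/- arXiv:math/0012196 — 7 statements merged into one kernel-verified Lean document; each statement's English description precedes it below -/
import Mathlib

section
/- For all integers n and k the following holds in the ring R_K3. Let ch(i_*L) := n·σ + k·F + n·p (the Chern character, computed via Grothendieck–Riemann–Roch, of the pushforward of a line bundle L on a spectral curve C = nσ + kF on an elliptic K3 surface) and ch(V) := n·1 − k·p (the Chern character of its rank-n fibrewise Fourier–Mukai transform V). Then ch(V)·(1+F) = n·1 + n·F − k·p, and its component vector (n, 0, n, −k) in the basis (1, σ, F, p) equals M4 applied to the component vector (0, n, k, n) of ch(i_*L). In other words, the O(F)-twisted fibrewise Fourier–Mukai transform T on an elliptic K3 acts on Chern characters by the adiabatic matrix M4: ch(T^0(i_*L)) = ch(V)·(1+F) = M4·ch(i_*L). -/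
/-- The 4-dimensional commutative ℚ-algebra `R_K3` with basis `(1, σ, F, p)`,
modelling the even rational cohomology of an elliptically fibered K3 surface
with section `σ`, fibre class `F` and point class `p`. -/
structure RK3 where
  c1 : ℚ   -- coefficient of 1
  cσ : ℚ   -- coefficient of σ
  cF : ℚ   -- coefficient of F
  cp : ℚ   -- coefficient of p

namespace RK3

/-- Multiplication determined by `σ² = −2p`, `σ·F = p`, `F² = 0` and
`σ·p = F·p = p² = 0`. -/
def mul (u v : RK3) : RK3 where
  c1 := u.c1 * v.c1
  cσ := u.c1 * v.cσ + u.cσ * v.c1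
  cF := u.c1 * v.cF + u.cF * v.c1
  cp := u.c1 * v.cp + u.cp * v.c1 - 2 * (u.cσ * v.cσ) + u.cσ * v.cF + u.cF * v.cσ

/-- Component vector with respect to the ordered basis `(1, σ, F, p)`. -/
def vec (u : RK3) : Fin 4 → ℚ := ![u.c1, u.cσ, u.cF, u.cp]

end RK3

/-- The adiabatic matrix `M4 = [[0,1,0,0],[−1,0,0,0],[0,0,0,1],[0,0,−1,0]]`. -/
def M4 : Matrix (Fin 4) (Fin 4) ℚ := !![0,1,0,0; -1,0,0,0; 0,0,0,1; 0,0,-1,0]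

/-- For all integers `n, k`, with `ch(i_*L) = n·σ + k·F + n·p`
(Chern character of the pushforward of a line bundle `L` on a spectral curve
`C = nσ + kF` on an elliptic K3) and `ch(V) = n·1 − k·p` (Chern character of
its rank-`n` fibrewise Fourier–Mukai transform), one has
`ch(V)·(1+F) = n·1 + n·F − k·p`, whose component vector `(n, 0, n, −k)` in the
basis `(1, σ, F, p)` equals `M4` applied to the component vector `(0, n, k, n)`
of `ch(i_*L)`: the `O(F)`-twisted fibrewise Fourier–Mukai transform `T` on an
elliptic K3 acts on Chern characters by the adiabatic matrix `M4`. -/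
theorem k3_fm_adiabatic (n k : ℤ) :
    (⟨(n : ℚ), 0, 0, -(k : ℚ)⟩ : RK3).mul ⟨1, 0, 1, 0⟩ =
        ⟨(n : ℚ), 0, (n : ℚ), -(k : ℚ)⟩ ∧
    RK3.vec ((⟨(n : ℚ), 0, 0, -(k : ℚ)⟩ : RK3).mul ⟨1, 0, 1, 0⟩) =
        M4.mulVec (RK3.vec ⟨0, (n : ℚ), (k : ℚ), (n : ℚ)⟩) := by
  constructor
  · simp [RK3.mul]
  · funext i
    fin_cases i <;>
      simp [RK3.mul, RK3.vec, M4, Matrix.mulVec, dotProduct,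
        Fin.sum_univ_four]
end

section
/- For every gamma in R with components (n, x, S, eta, a, s), the product Td(N)·Shat(gamma) in R has components (x, −n, eta, −S, s − (x/12)<c1,c1>, −a + x<c1,c1>). -/
/-!
Model `R` of the vertical even rational cohomology of an elliptically fibered
Calabi–Yau threefold `π : X → B` with section `σ`.  An element
`γ = n·1 + x·σ + S + σ·η + a·F + s·σF` (with `n, x, a, s ∈ ℚ` and `S, η ∈ A2`,
where `A2` models `H²(B)` with intersection form `B` and `c1` models `π*c1(B)`)
is recorded by its components `(n, x, S, η, a, s)`.
-/
structure R6 (A2 : Type*) where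
  n : ℚ
  x : ℚ
  S : A2
  eta : A2
  a : ℚ
  s : ℚ

namespace R6

variable {A2 : Type*} [AddCommGroup A2] [Module ℚ A2]

/-- The multiplication of `R`, induced by the relations `S·S' = ⟨S,S'⟩·F` for
`S, S' ∈ A2`, `F·A2 = 0`, `F² = 0` and `σ² = −c1·σ`. -/
def mul (B : A2 →ₗ[ℚ] A2 →ₗ[ℚ] ℚ) (c1 : A2) (γ γ' : R6 A2) : R6 A2 where
  n := γ.n * γ'.n
  x := γ.n * γ'.x + γ.x * γ'.n
  S := γ.n • γ'.S + γ'.n • γ.S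
  eta := γ.n • γ'.eta + γ'.n • γ.eta + γ.x • γ'.S + γ'.x • γ.S - (γ.x * γ'.x) • c1
  a := γ.n * γ'.a + γ'.n * γ.a + B γ.S γ'.S
  s := γ.n * γ'.s + γ'.n * γ.s + γ.x * γ'.a + γ'.x * γ.a
      - γ.x * B c1 γ'.eta - γ'.x * B c1 γ.eta + B γ.S γ'.eta + B γ'.S γ.eta

/-- Todd class of the normal bundle of the section:
`Td(N) = 1 − c1/2 + c1²/12`, with `c1² = ⟨c1,c1⟩·F`. -/
def TdN (B : A2 →ₗ[ℚ] A2 →ₗ[ℚ] ℚ) (c1 : A2) : R6 A2 :=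
  ⟨1, 0, (-(1/2) : ℚ) • c1, 0, B c1 c1 / 12, 0⟩

/-- Chern character of the inverse relative Fourier–Mukai transform (the paper's
GRR computation): for `γ` with components `(n, x, S, η, a, s)`,
`Ŝ(γ) = x·1 + (−n·σ + η + (x/2)c1) + σ·(−(n/2)c1 − S)
  + (s + ⟨η,c1⟩/2 + (x/12)⟨c1,c1⟩)·F
  + (−(n/6)⟨c1,c1⟩ − a − ⟨c1,S⟩/2 + x·⟨c1,c1⟩)·σF`. -/
def Shat (B : A2 →ₗ[ℚ] A2 →ₗ[ℚ] ℚ) (c1 : A2) (γ : R6 A2) : R6 A2 :=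
  ⟨γ.x, -γ.n, γ.eta + (γ.x / 2) • c1, -((γ.n / 2) • c1) - γ.S,
   γ.s + B γ.eta c1 / 2 + (γ.x / 12) * B c1 c1,
   -(γ.n / 6) * B c1 c1 - γ.a - B c1 γ.S / 2 + γ.x * B c1 c1⟩

end R6

/-- For every `γ` in `R` with components `(n, x, S, η, a, s)`, the
product `Td(N)·Ŝ(γ)` in `R` has components
`(x, −n, η, −S, s − (x/12)⟨c1,c1⟩, −a + x⟨c1,c1⟩)`. -/
theorem tdN_mul_shat {A2 : Type*} [AddCommGroup A2] [Module ℚ A2]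
    (B : A2 →ₗ[ℚ] A2 →ₗ[ℚ] ℚ) (hB : ∀ u v : A2, B u v = B v u) (c1 : A2)
    (γ : R6 A2) :
    R6.mul B c1 (R6.TdN B c1) (R6.Shat B c1 γ) =
      ⟨γ.x, -γ.n, γ.eta, -γ.S,
       γ.s - (γ.x / 12) * B c1 c1, -γ.a + γ.x * B c1 c1⟩ := by
  simp only [R6.mul, R6.TdN, R6.Shat, map_add, map_sub, map_neg, map_smul,
    LinearMap.add_apply, LinearMap.sub_apply, LinearMap.neg_apply,
    LinearMap.smul_apply, smul_eq_mul, R6.mk.injEq]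
  refine ⟨by ring, by ring, ?_, ?_, ?_, ?_⟩
  · module
  · module
  · rw [hB γ.eta c1]; ring
  · simp only [map_zero]; ring
end

section
/- For every gamma in R whose components are (n, 0, S, eta, a, s) (i.e. gamma is of fibre degree zero, x = 0), one has Td(N)·Shat(gamma) = M(gamma); that is, the Td(N)-twisted cohomological inverse fibrewise Fourier–Mukai transform sends the component vector (n, 0, S, eta, a, s) to (0, −n, eta, −S, s, −a), acting by the adiabatic block-antidiagonal matrix M. -/
namespace R6

variable {A2 : Type*} [AddCommGroup A2] [Module ℚ A2]

/-- The adiabatic block-antidiagonal matrix `M`: the ℚ-linear map on `R` sending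
components `(n, x, S, η, a, s)` to `(x, −n, η, −S, s, −a)`. -/
def Mmap (γ : R6 A2) : R6 A2 := ⟨γ.x, -γ.n, γ.eta, -γ.S, γ.s, -γ.a⟩

end R6

/-- For every `γ` in `R` of fibre degree zero (`x = 0`), one has
`Td(N)·Ŝ(γ) = M(γ)`:  the `Td(N)`-twisted cohomological inverse fibrewise
Fourier–Mukai transform sends `(n, 0, S, η, a, s)` to `(0, −n, η, −S, s, −a)`,
acting by the adiabatic block-antidiagonal matrix `M`. -/
theorem tdN_mul_shat_eq_M {A2 : Type*} [AddCommGroup A2] [Module ℚ A2]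
    (B : A2 →ₗ[ℚ] A2 →ₗ[ℚ] ℚ) (hB : ∀ u v : A2, B u v = B v u) (c1 : A2)
    (γ : R6 A2) (hx : γ.x = 0) :
    R6.mul B c1 (R6.TdN B c1) (R6.Shat B c1 γ) = R6.Mmap γ := by
  obtain ⟨n, x, S, eta, a, s⟩ := γ
  simp only at hx
  subst hx
  simp only [R6.mul, R6.TdN, R6.Shat, R6.Mmap, R6.mk.injEq, map_add, map_sub, map_neg,
    map_smul, smul_add, smul_sub, smul_neg, smul_smul, one_smul, zero_smul, smul_zero,
    smul_eq_mul, mul_zero, zero_mul, mul_one, one_mul, add_zero, zero_add, neg_zero,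
    LinearMap.add_apply, LinearMap.sub_apply, LinearMap.neg_apply, LinearMap.smul_apply,
    LinearMap.zero_apply, map_zero, sub_zero]
  exact ⟨trivial, trivial, by module, by module, by rw [hB eta c1]; ring, by ring⟩
end

section
/- Set Td(N⁻¹) := 1 + c1/2 + c1²/12 in R (the Todd class of the dual line bundle N⁻¹ = K_B⁻¹). For every gamma in R whose components are (n, 0, S, eta, a, s) (fibre degree zero, x = 0), one has Td(N⁻¹)·Sfm(gamma) = M(gamma); that is, the Td(N⁻¹)-twisted cohomological direct fibrewise Fourier–Mukai transform sends the component vector (n, 0, S, eta, a, s) to (0, −n, eta, −S, s, −a), acting by the adiabatic block-antidiagonal matrix M. -/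
namespace R6

variable {A2 : Type*} [AddCommGroup A2] [Module ℚ A2]

/-- Todd class of the dual of the normal bundle of the section:
`Td(N⁻¹) = 1 + c1/2 + c1²/12`, with `c1² = ⟨c1,c1⟩·F`. -/
def TdNinv (B : A2 →ₗ[ℚ] A2 →ₗ[ℚ] ℚ) (c1 : A2) : R6 A2 :=
  ⟨1, 0, ((1/2) : ℚ) • c1, 0, B c1 c1 / 12, 0⟩

/-- Chern character of the direct relative Fourier–Mukai transform (the paper's
GRR computation): for `γ` with components `(n, x, S, η, a, s)`,
`S(γ) = x·1 + (−n·σ + η − (x/2)c1) + σ·((n/2)c1 − S)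
  + (s − ⟨η,c1⟩/2 + (x/12)⟨c1,c1⟩)·F + (−(n/6)⟨c1,c1⟩ − a + ⟨c1,S⟩/2)·σF`. -/
def Sfm (B : A2 →ₗ[ℚ] A2 →ₗ[ℚ] ℚ) (c1 : A2) (γ : R6 A2) : R6 A2 :=
  ⟨γ.x, -γ.n, γ.eta - (γ.x / 2) • c1, (γ.n / 2) • c1 - γ.S,
   γ.s - B γ.eta c1 / 2 + (γ.x / 12) * B c1 c1,
   -(γ.n / 6) * B c1 c1 - γ.a + B c1 γ.S / 2⟩

end R6

/-- For every `γ` in `R` of fibre degree zero (`x = 0`), one has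
`Td(N⁻¹)·S(γ) = M(γ)`:  the `Td(N⁻¹)`-twisted cohomological direct fibrewise
Fourier–Mukai transform sends `(n, 0, S, η, a, s)` to `(0, −n, η, −S, s, −a)`,
acting by the adiabatic block-antidiagonal matrix `M`. -/
theorem tdNinv_mul_sfm_eq_M {A2 : Type*} [AddCommGroup A2] [Module ℚ A2]
    (B : A2 →ₗ[ℚ] A2 →ₗ[ℚ] ℚ) (hB : ∀ u v : A2, B u v = B v u) (c1 : A2)
    (γ : R6 A2) (hx : γ.x = 0) :
    R6.mul B c1 (R6.TdNinv B c1) (R6.Sfm B c1 γ) = R6.Mmap γ := by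
  simp only [R6.mul, R6.TdNinv, R6.Sfm, R6.Mmap, hx, R6.mk.injEq]
  refine ⟨by ring, by ring, by module, by module, ?_, ?_⟩
  · simp only [LinearMap.smul_apply, map_sub, map_smul, zero_smul, sub_zero,
      smul_eq_mul, hB γ.eta c1]
    ring
  · simp only [LinearMap.smul_apply, map_sub, map_smul, map_zero, smul_eq_mul,
      hB γ.S c1]
    ring
end

section
/- Let t := 1 − (1/4)c1 + (1/96)c1² in R. Then t² = Td(N), and t is invertible in R with t⁻¹ = 1 + (1/4)c1 + (5/96)c1². Moreover, for every gamma in R whose components are (n, 0, S, eta, a, s) (fibre degree zero, x = 0), defining the twisted charges Q(gamma) := gamma·t⁻¹ and Q^(gamma) := Shat(gamma)·t, one has Q^(gamma) = M(Q(gamma)); that is, with the square-root-of-Td(N) twisted charge, the inverse fibrewise Fourier–Mukai transform acts on charges exactly by the adiabatic matrix M. -/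
namespace R6

variable {A2 : Type*} [AddCommGroup A2] [Module ℚ A2]

/-- The unit `1` of `R`. -/
def one : R6 A2 := ⟨1, 0, 0, 0, 0, 0⟩

/-- The square root `t := 1 − (1/4)c1 + (1/96)c1²` of `Td(N)`. -/
def tRoot (B : A2 →ₗ[ℚ] A2 →ₗ[ℚ] ℚ) (c1 : A2) : R6 A2 :=
  ⟨1, 0, (-(1/4) : ℚ) • c1, 0, B c1 c1 / 96, 0⟩

/-- The claimed inverse `t⁻¹ = 1 + (1/4)c1 + (5/96)c1²` of `t`. -/
def tRootInv (B : A2 →ₗ[ℚ] A2 →ₗ[ℚ] ℚ) (c1 : A2) : R6 A2 :=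
  ⟨1, 0, ((1/4) : ℚ) • c1, 0, 5 * B c1 c1 / 96, 0⟩

end R6

/-- With `t := 1 − (1/4)c1 + (1/96)c1²` one has `t² = Td(N)`, `t`
is invertible with inverse `t⁻¹ = 1 + (1/4)c1 + (5/96)c1²`, and for every `γ`
of fibre degree zero (`x = 0`), the twisted charges `Q(γ) := γ·t⁻¹` and
`Q̂(γ) := Ŝ(γ)·t` satisfy `Q̂(γ) = M(Q(γ))`:  with the `√Td(N)`-twisted charge
the inverse fibrewise Fourier–Mukai transform acts exactly by the adiabatic
matrix `M`. -/
theorem sqrt_tdN_twisted_charge {A2 : Type*} [AddCommGroup A2] [Module ℚ A2]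
    (B : A2 →ₗ[ℚ] A2 →ₗ[ℚ] ℚ) (hB : ∀ u v : A2, B u v = B v u) (c1 : A2) :
    R6.mul B c1 (R6.tRoot B c1) (R6.tRoot B c1) = R6.TdN B c1 ∧
    R6.mul B c1 (R6.tRoot B c1) (R6.tRootInv B c1) = R6.one ∧
    R6.mul B c1 (R6.tRootInv B c1) (R6.tRoot B c1) = R6.one ∧
    ∀ γ : R6 A2, γ.x = 0 →
      R6.mul B c1 (R6.Shat B c1 γ) (R6.tRoot B c1) =
        R6.Mmap (R6.mul B c1 γ (R6.tRootInv B c1)) := by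
  refine ⟨?_, ?_, ?_, ?_⟩
  · simp only [R6.mul, R6.tRoot, R6.TdN, R6.mk.injEq, map_smul, map_neg, map_zero, LinearMap.zero_apply, LinearMap.smul_apply,
      LinearMap.neg_apply, smul_eq_mul]
    refine ⟨by ring, by ring, by module, by module, by ring, by ring⟩
  · simp only [R6.mul, R6.tRoot, R6.tRootInv, R6.one, R6.mk.injEq, map_smul, map_neg, map_zero, LinearMap.zero_apply,
      LinearMap.smul_apply, LinearMap.neg_apply, smul_eq_mul]
    refine ⟨by ring, by ring, by module, by module, by ring, by ring⟩
  · simp only [R6.mul, R6.tRoot, R6.tRootInv, R6.one, R6.mk.injEq, map_smul, map_neg, map_zero, LinearMap.zero_apply,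
      LinearMap.smul_apply, LinearMap.neg_apply, smul_eq_mul]
    refine ⟨by ring, by ring, by module, by module, by ring, by ring⟩
  · intro γ hx
    simp only [R6.mul, R6.tRoot, R6.tRootInv, R6.Shat, R6.Mmap, hx, R6.mk.injEq, map_smul,
      map_neg, map_sub, map_add, LinearMap.smul_apply, LinearMap.neg_apply, LinearMap.sub_apply,
      LinearMap.add_apply, smul_eq_mul, hB c1 γ.S, hB c1 γ.eta]
    refine ⟨by ring, by ring, by module, by module, by simp only [map_zero]; ring, by simp only [map_zero]; ring⟩
end

section
/- For every gamma in R with components (n, x, S, eta, a, s), define chI(gamma) := (x − n)·1 + (−x·sigma − S + (n − x/2)·c1 + eta) + (−sigma·eta + (s − a − (n/2 − x/12)<c1,c1> + <c1,S> − <eta,c1>/2)·F) + (−s)·sigma F (the paper's Chern character of the Fourier–Mukai transform with kernel the ideal sheaf of the diagonal of the fibre product X ×_B X) and chJ(gamma) := (s + <c1,S> + (x/12)(c2 − <c1,c1>) − x)·1 + (−n·c1 − eta + (x/2)·c1) + ((n/2 − x/12)<c1,c1> − <c1,S> + <eta,c1>/2 − s)·F (the paper's Chern character of the transform with kernel the ideal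 sheaf J of X ×_B X inside X × X). Then chI(gamma) + chJ(gamma) = Int(gamma·Td(X))·1 − gamma, i.e. the two relative transforms add up to the Kontsevich conifold transform with kernel the ideal sheaf of the diagonal of X × X. -/
/-!
Model `R` of the vertical even rational cohomology of an elliptically fibered
Calabi–Yau threefold `π : X → B` with section `σ`.  An element
`γ = n·1 + x·σ + S + σ·η + a·F + s·σF` (with `n, x, a, s ∈ ℚ` and `S, η ∈ A2`,
where `A2` models `H²(B)` with intersection form `B` and `c1` models `π*c1(B)`)
is recorded by its components `(n, x, S, η, a, s)`.
-/
set_option linter.unusedSectionVars false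

namespace R6

variable {A2 : Type*} [AddCommGroup A2] [Module ℚ A2]

instance : Add (R6 A2) :=
  ⟨fun u v => ⟨u.n + v.n, u.x + v.x, u.S + v.S, u.eta + v.eta, u.a + v.a, u.s + v.s⟩⟩

instance : Sub (R6 A2) :=
  ⟨fun u v => ⟨u.n - v.n, u.x - v.x, u.S - v.S, u.eta - v.eta, u.a - v.a, u.s - v.s⟩⟩

instance : SMul ℚ (R6 A2) :=
  ⟨fun q u => ⟨q * u.n, q * u.x, q • u.S, q • u.eta, q * u.a, q * u.s⟩⟩

instance : One (R6 A2) := ⟨⟨1, 0, 0, 0, 0, 0⟩⟩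

/-- `Td(X) = 1 + c2(X)/12` where `c2(X) = 12·σ·c1 + 11·c1² + c2·F`
(and `c1² = ⟨c1,c1⟩·F`). -/
def TdX (B : A2 →ₗ[ℚ] A2 →ₗ[ℚ] ℚ) (c1 : A2) (c2 : ℚ) : R6 A2 :=
  ⟨1, 0, 0, c1, (11 * B c1 c1 + c2) / 12, 0⟩

/-- Integration over `X`: the `σF`-coefficient. -/
def Int (γ : R6 A2) : ℚ := γ.s

/-- The paper's Chern character of the Fourier–Mukai transform with kernel the
ideal sheaf of the diagonal of the fibre product `X ×_B X`:
`chI(γ) = (x−n)·1 + (−x·σ − S + (n − x/2)·c1 + η)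
  + (−σ·η + (s − a − (n/2 − x/12)⟨c1,c1⟩ + ⟨c1,S⟩ − ⟨η,c1⟩/2)·F) + (−s)·σF`. -/
def chI (B : A2 →ₗ[ℚ] A2 →ₗ[ℚ] ℚ) (c1 : A2) (γ : R6 A2) : R6 A2 :=
  ⟨γ.x - γ.n, -γ.x, -γ.S + (γ.n - γ.x / 2) • c1 + γ.eta, -γ.eta,
   γ.s - γ.a - (γ.n / 2 - γ.x / 12) * B c1 c1 + B c1 γ.S - B γ.eta c1 / 2,
   -γ.s⟩

/-- The paper's Chern character of the transform with kernel the ideal sheaf `J`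
of `X ×_B X` inside `X × X`:
`chJ(γ) = (s + ⟨c1,S⟩ + (x/12)(c2 − ⟨c1,c1⟩) − x)·1 + (−n·c1 − η + (x/2)·c1)
  + ((n/2 − x/12)⟨c1,c1⟩ − ⟨c1,S⟩ + ⟨η,c1⟩/2 − s)·F`. -/
def chJ (B : A2 →ₗ[ℚ] A2 →ₗ[ℚ] ℚ) (c1 : A2) (c2 : ℚ) (γ : R6 A2) : R6 A2 :=
  ⟨γ.s + B c1 γ.S + (γ.x / 12) * (c2 - B c1 c1) - γ.x, 0,
   -(γ.n • c1) - γ.eta + (γ.x / 2) • c1, 0,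
   (γ.n / 2 - γ.x / 12) * B c1 c1 - B c1 γ.S + B γ.eta c1 / 2 - γ.s, 0⟩

end R6

section
variable {A2 : Type*} [AddCommGroup A2] [Module ℚ A2]
@[simp] lemma add_n (u v : R6 A2) : (u + v).n = u.n + v.n := rfl
@[simp] lemma add_x (u v : R6 A2) : (u + v).x = u.x + v.x := rfl
@[simp] lemma add_S (u v : R6 A2) : (u + v).S = u.S + v.S := rfl
@[simp] lemma add_eta (u v : R6 A2) : (u + v).eta = u.eta + v.eta := rfl
@[simp] lemma add_a (u v : R6 A2) : (u + v).a = u.a + v.a := rfl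
@[simp] lemma add_s (u v : R6 A2) : (u + v).s = u.s + v.s := rfl
@[simp] lemma sub_n (u v : R6 A2) : (u - v).n = u.n - v.n := rfl
@[simp] lemma sub_x (u v : R6 A2) : (u - v).x = u.x - v.x := rfl
@[simp] lemma sub_S (u v : R6 A2) : (u - v).S = u.S - v.S := rfl
@[simp] lemma sub_eta (u v : R6 A2) : (u - v).eta = u.eta - v.eta := rfl
@[simp] lemma sub_a (u v : R6 A2) : (u - v).a = u.a - v.a := rfl
@[simp] lemma sub_s (u v : R6 A2) : (u - v).s = u.s - v.s := rfl
@[simp] lemma smul_n (q : ℚ) (u : R6 A2) : (q • u).n = q * u.n := rfl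
@[simp] lemma smul_x (q : ℚ) (u : R6 A2) : (q • u).x = q * u.x := rfl
@[simp] lemma smul_S (q : ℚ) (u : R6 A2) : (q • u).S = q • u.S := rfl
@[simp] lemma smul_eta (q : ℚ) (u : R6 A2) : (q • u).eta = q • u.eta := rfl
@[simp] lemma smul_a (q : ℚ) (u : R6 A2) : (q • u).a = q * u.a := rfl
@[simp] lemma smul_s (q : ℚ) (u : R6 A2) : (q • u).s = q * u.s := rfl

lemma ext6 (u v : R6 A2) (h1 : u.n = v.n) (h2 : u.x = v.x) (h3 : u.S = v.S)
    (h4 : u.eta = v.eta) (h5 : u.a = v.a) (h6 : u.s = v.s) : u = v := by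
  cases u; cases v; simp_all
end

@[simp] lemma one_n {A2 : Type*} [AddCommGroup A2] [Module ℚ A2] : (1 : R6 A2).n = 1 := rfl
@[simp] lemma one_x {A2 : Type*} [AddCommGroup A2] [Module ℚ A2] : (1 : R6 A2).x = 0 := rfl
@[simp] lemma one_S {A2 : Type*} [AddCommGroup A2] [Module ℚ A2] : (1 : R6 A2).S = 0 := rfl
@[simp] lemma one_eta {A2 : Type*} [AddCommGroup A2] [Module ℚ A2] : (1 : R6 A2).eta = 0 := rfl
@[simp] lemma one_a {A2 : Type*} [AddCommGroup A2] [Module ℚ A2] : (1 : R6 A2).a = 0 := rfl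
@[simp] lemma one_s {A2 : Type*} [AddCommGroup A2] [Module ℚ A2] : (1 : R6 A2).s = 0 := rfl

/-- For every `γ` in `R`, `chI(γ) + chJ(γ) = (∫ γ·Td(X))·1 − γ`:
the two relative Fourier–Mukai transforms add up to the Kontsevich conifold
transform with kernel the ideal sheaf of the diagonal of `X × X`. -/
theorem chI_add_chJ {A2 : Type*} [AddCommGroup A2] [Module ℚ A2]
    (B : A2 →ₗ[ℚ] A2 →ₗ[ℚ] ℚ) (hB : ∀ u v : A2, B u v = B v u) (c1 : A2)
    (c2 : ℚ) (γ : R6 A2) :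
    R6.chI B c1 γ + R6.chJ B c1 c2 γ =
      R6.Int (R6.mul B c1 γ (R6.TdX B c1 c2)) • (1 : R6 A2) - γ := by
  refine ext6 _ _ ?_ ?_ ?_ ?_ ?_ ?_ <;>
    simp only [R6.chI, R6.chJ, R6.Int, R6.mul, R6.TdX, add_n, add_x, add_S, add_eta,
      add_a, add_s, sub_n, sub_x, sub_S, sub_eta, sub_a, sub_s, smul_n, smul_x, smul_S,
      smul_eta, smul_a, smul_s, one_n, one_x, one_S, one_eta, one_a, one_s,
      hB γ.S c1, hB γ.eta c1, smul_zero, mul_zero, mul_one, map_zero, LinearMap.zero_apply]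
  · ring
  · ring
  · module
  · module
  · ring
  · ring
end

section
/- For the degree-8 model, for each divisor D in {L, H} (where H := E + 2L), the map Phi^{-1} ∘ twist_D ∘ Phi on the BPS charge space Q^6 is Q-linear and its matrix equals the inverse transpose (S_D^{-1})^t of the monodromy matrix S_D (equivalently (S_D^t)^{-1}). This verifies Kontsevich's proposed correspondence between the monodromy about the divisor D_D in moduli space and tensoring by the line bundle O_X(D), with period monodromies acting on the charge lattice by inverse transpose. -/
open Matrix

/-- Topological invariants (Chern data) of a sheaf `V` on the two-parameter
Calabi–Yau `X = P^4_{1,1,2,2,2}[8]`: the rank, `ch1 = c1E·E + c1L·L` in the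
divisor basis `(E, L)`, `ch2 = c2h·h + c2l·l` in the curve basis `(h, l)`,
and `ch3 ∈ ℚ`. -/
structure ChernData where
  r : ℚ
  c1E : ℚ
  c1L : ℚ
  c2h : ℚ
  c2l : ℚ
  c3 : ℚ

/-- Product of two divisor classes (coordinates in the basis `(E, L)`) as a
curve class (coordinates in the basis `(h, l)`), for the degree-8 model:
`E·E = −8h + 4l`, `E·L = 4h`, `L·L = 0`. -/
def divMul8 (d e : ℚ × ℚ) : ℚ × ℚ :=
  (-8 * d.1 * e.1 + 4 * (d.1 * e.2 + d.2 * e.1), 4 * d.1 * e.1)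

/-- Intersection number of a divisor class with a curve class:
`E·h = 1`, `E·l = −2`, `L·h = 0`, `L·l = 1`. -/
def divCurve (d c : ℚ × ℚ) : ℚ := d.1 * c.1 - 2 * d.1 * c.2 + d.2 * c.2

/-- The degree-8 BPS charge dictionary `Φ`, sending
`n = (n6, n4^1, n4^2, n0, n2^1, n2^2)` to the Chern data with `r = n6`,
`ch1 = n4^1·E + n4^2·L`, `ch2 = (4n4^1 − 2n4^2 + n2^1)·h + (−2n4^1 + n2^2)·l`,
`ch3 = −n0 − (2/3)n4^1 − 2n4^2`. -/
def Phi8 (n : Fin 6 → ℚ) : ChernData :=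
  ⟨n 0, n 1, n 2, 4 * n 1 - 2 * n 2 + n 4, -2 * n 1 + n 5,
   -(n 3) - (2/3) * n 1 - 2 * n 2⟩

/-- Twisting by the line bundle `O_X(D)` (degree-8 intersection products):
`(r, ch1, ch2, ch3) ↦ (r, ch1 + rD, ch2 + ch1·D + (r/2)D²,
ch3 + ch2·D + (1/2)ch1·D² + (r/6)D³)`. -/
def twist8 (D : ℚ × ℚ) (c : ChernData) : ChernData :=
  ⟨c.r, c.c1E + c.r * D.1, c.c1L + c.r * D.2,
   c.c2h + (divMul8 (c.c1E, c.c1L) D).1 + (c.r / 2) * (divMul8 D D).1,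
   c.c2l + (divMul8 (c.c1E, c.c1L) D).2 + (c.r / 2) * (divMul8 D D).2,
   c.c3 + divCurve D (c.c2h, c.c2l) + (1/2) * divCurve (c.c1E, c.c1L) (divMul8 D D)
     + (c.r / 6) * divCurve D (divMul8 D D)⟩

/-- Degree-8 monodromy matrix `S_L`, on the lattice ordered
`(n6, n4^1, n4^2, n0, n2^1, n2^2)`. -/
def SL8 : Matrix (Fin 6) (Fin 6) ℚ :=
  !![1,0,-1,2,-2,0; 0,1,0,-2,-4,0; 0,0,1,0,0,0;
     0,0,0,1,0,0; 0,0,0,0,1,0; 0,0,0,1,0,1]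

/-- Degree-8 monodromy matrix `S_H`. -/
def SH8 : Matrix (Fin 6) (Fin 6) ℚ :=
  !![1,-1,-2,6,4,0; 0,1,0,4,0,-4; 0,0,1,-4,-4,0;
     0,0,0,1,0,0; 0,0,0,1,1,0; 0,0,0,0,0,1]
lemma cons_val_five' {α : Type*} (x : α) (u : Fin 5 → α) :
    Matrix.vecCons x u 5 = u 4 := rfl

def Psi8 (c : ChernData) : Fin 6 → ℚ :=
  ![c.r, c.c1E, c.c1L, -(c.c3 + (2/3) * c.c1E + 2 * c.c1L),
    c.c2h - 4 * c.c1E + 2 * c.c1L, c.c2l + 2 * c.c1E]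

lemma Phi8_bij : Function.Bijective Phi8 := by
  have hl : Function.LeftInverse Psi8 Phi8 := by
    intro n; funext i
    fin_cases i <;>
      simp [Phi8, Psi8, cons_val_five'] <;> ring
  have hr : Function.RightInverse Psi8 Phi8 := by
    intro c
    obtain ⟨r, a, b, h, l, t⟩ := c
    simp only [Phi8, Psi8, ChernData.mk.injEq, cons_val_five',
      Matrix.cons_val_zero, Matrix.cons_val_one, Matrix.cons_val_two,
      Matrix.cons_val_three, Matrix.cons_val_four, Matrix.head_cons,
      Matrix.tail_cons]
    refine ⟨by trivial, by trivial, by trivial, by ring, by ring, by ring⟩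
  exact ⟨hl.injective, hr.surjective⟩

lemma SL8_inv : SL8⁻¹ = !![1,0,1,-2,2,0; 0,1,0,2,4,0; 0,0,1,0,0,0;
     0,0,0,1,0,0; 0,0,0,0,1,0; 0,0,0,-1,0,1] := by
  apply inv_eq_right_inv
  ext i j
  fin_cases i <;> fin_cases j <;>
    simp [SL8, Matrix.mul_apply, Fin.sum_univ_six, cons_val_five'] <;>
    norm_num [Matrix.vecHead, Matrix.vecTail, Function.comp]

lemma SH8_inv : SH8⁻¹ = !![1,1,2,-6,4,4; 0,1,0,-4,0,4; 0,0,1,0,4,0;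
     0,0,0,1,0,0; 0,0,0,-1,1,0; 0,0,0,0,0,1] := by
  apply inv_eq_right_inv
  ext i j
  fin_cases i <;> fin_cases j <;>
    simp [SH8, Matrix.mul_apply, Fin.sum_univ_six, cons_val_five'] <;>
    norm_num [Matrix.vecHead, Matrix.vecTail, Function.comp]


/-- For the degree-8 model, for each divisor `D ∈ {L, H}`
(where `H = E + 2L`, i.e. `L = (0,1)` and `H = (1,2)` in the basis `(E,L)`),
the map `Φ⁻¹ ∘ twist_D ∘ Φ` on the BPS charge space `ℚ⁶` is ℚ-linear with
matrix the inverse transpose `(S_D⁻¹)ᵀ` of the monodromy matrix `S_D`: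
Kontsevich's correspondence between the monodromy about the divisor `D_D` in
moduli space and tensoring by `O_X(D)`, with period monodromies acting on the
charge lattice by inverse transpose. -/
theorem degree8_monodromy_is_twist :
    Function.Bijective Phi8 ∧
    (∀ n : Fin 6 → ℚ, twist8 (0, 1) (Phi8 n) = Phi8 ((SL8⁻¹)ᵀ.mulVec n)) ∧
    (∀ n : Fin 6 → ℚ, twist8 (1, 2) (Phi8 n) = Phi8 ((SH8⁻¹)ᵀ.mulVec n)) := by
  refine ⟨Phi8_bij, ?_, ?_⟩ <;> intro n
  · rw [SL8_inv]
    simp only [twist8, Phi8, divMul8, divCurve, Matrix.mulVec, dotProduct,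
      Matrix.transpose_apply, Fin.sum_univ_six, Matrix.cons_val', Matrix.of_apply,
      Matrix.cons_val_zero, Matrix.cons_val_one, Matrix.cons_val_two,
      Matrix.cons_val_three, Matrix.cons_val_four, cons_val_five',
      Matrix.head_cons, Matrix.tail_cons, Matrix.empty_val',
      Matrix.cons_val_fin_one, ChernData.mk.injEq]
    simp only [Matrix.vecHead]
    refine ⟨by ring, by ring, by ring, by ring, by ring, by ring⟩
  · rw [SH8_inv]
    simp only [twist8, Phi8, divMul8, divCurve, Matrix.mulVec, dotProduct,
      Matrix.transpose_apply, Fin.sum_univ_six, Matrix.cons_val', Matrix.of_apply,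
      Matrix.cons_val_zero, Matrix.cons_val_one, Matrix.cons_val_two,
      Matrix.cons_val_three, Matrix.cons_val_four, cons_val_five',
      Matrix.head_cons, Matrix.tail_cons, Matrix.empty_val',
      Matrix.cons_val_fin_one, ChernData.mk.injEq]
    simp only [Matrix.vecHead]
    refine ⟨by ring, by ring, by ring, by ring, by ring, by ring⟩
end
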